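/- Let X be a Banach space and let x ∈ S_X be a Daugavet point. Then for every ε > 0 and every slice S(B_X, x*, α) of B_X there exists a slice S(B_X, x₀*, α₀) such that S(B_X, x₀*, α₀) ⊆ S(B_X, x*, α) and ‖x + y‖ ≥ 2 − ε for every y ∈ S(B_X, x₀*, α₀). -/

import Mathlib

open Filter Topology

section Defs

variable {E : Type*} [NormedAddCommGroup E] [NormedSpace ℝ E]

/-- A ballSlice of the closed unit ball of `E` determined by `f ∈ E*` and `α > 0`. -/
def ballSlice (f : E →L[ℝ] ℝ) (α : ℝ) : Set E :=
  {x | ‖x‖ ≤ 1 ∧ ‖f‖ - α < f x}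

/-- `x` is a Daugavet point. -/
def DaugavetPoint (x : E) : Prop :=
  ∀ (f : E →L[ℝ] ℝ) (α ε : ℝ), 0 < α → 0 < ε →
    ∃ y ∈ ballSlice f α, 2 - ε ≤ ‖x - y‖

/-- `x` is a Δ-point. -/
def DeltaPoint (x : E) : Prop :=
  ∀ (ε : ℝ), 0 < ε → ∀ (f : E →L[ℝ] ℝ) (α : ℝ), 0 < α → x ∈ ballSlice f α →
    ∃ y ∈ ballSlice f α, 2 - ε ≤ ‖x - y‖

/-- The Daugavet property (geometric characterization). -/
def DaugavetProp (E : Type*) [NormedAddCommGroup E] [NormedSpace ℝ E] : Prop :=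
  ∀ x : E, ‖x‖ = 1 → ∀ (f : E →L[ℝ] ℝ) (α ε : ℝ), 0 < α → 0 < ε →
    ∃ y ∈ ballSlice f α, 2 - ε < ‖x + y‖

/-- The weak operator Daugavet property. -/
def WODP (E : Type*) [NormedAddCommGroup E] [NormedSpace ℝ E] : Prop :=
  ∀ (ε : ℝ), 0 < ε → ∀ (n : ℕ) (xs : Fin n → E), (∀ i, ‖xs i‖ = 1) →
    ∀ (f : E →L[ℝ] ℝ) (α : ℝ), 0 < α → ∀ x' : E, ‖x'‖ ≤ 1 →
      ∃ x ∈ ballSlice f α, ∃ T : E →L[ℝ] E,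
        ‖T‖ ≤ 1 + ε ∧ (∀ i, ‖T (xs i) - xs i‖ < ε) ∧ ‖T x - x'‖ < ε

/-- `y` is a strongly exposed point of the closed unit ball of `E`. -/
def StronglyExposedUnitBall (y : E) : Prop :=
  ‖y‖ ≤ 1 ∧ ∃ f : E →L[ℝ] ℝ, ‖f‖ = 1 ∧ f y = 1 ∧
    ∀ yn : ℕ → E, (∀ n, ‖yn n‖ ≤ 1) →
      Tendsto (fun n => f (yn n)) atTop (𝓝 1) → Tendsto yn atTop (𝓝 y)

/-- `y` is a strongly exposed point of the set `C`. -/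
def StronglyExposedIn (C : Set E) (y : E) : Prop :=
  y ∈ C ∧ ∃ f : E →L[ℝ] ℝ, (∀ z ∈ C, f z ≤ f y) ∧
    ∀ yn : ℕ → E, (∀ n, yn n ∈ C) →
      Tendsto (fun n => f (yn n)) atTop (𝓝 (f y)) → Tendsto yn atTop (𝓝 y)

/-- The Radon–Nikodým property in its geometric form: every nonempty closed bounded convex
set is the closed convex hull of its strongly exposed points. -/
def RNP (E : Type*) [NormedAddCommGroup E] [NormedSpace ℝ E] : Prop :=
  ∀ C : Set E, C.Nonempty → IsClosed C → Bornology.IsBounded C → Convex ℝ C →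
    C = closure (convexHull ℝ {y | StronglyExposedIn C y})

/-- `y` is a denting point of the closed unit ball. -/
def DentingPoint (y : E) : Prop :=
  ∀ ε : ℝ, 0 < ε → ∃ (f : E →L[ℝ] ℝ) (α : ℝ), 0 < α ∧ y ∈ ballSlice f α ∧
    Metric.diam (ballSlice f α) < ε

/-- `Z`, together with the bilinear map `m : X → Y → Z`, is (a realization of) the projective
tensor product `X ⊗̂π Y`: the span of elementary tensors is dense and the norm of any element
of that span is given by the projective tensor norm. -/
structure IsProjTensor {X Y Z : Type*} [NormedAddCommGroup X] [NormedSpace ℝ X]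
    [NormedAddCommGroup Y] [NormedSpace ℝ Y] [NormedAddCommGroup Z] [NormedSpace ℝ Z]
    (m : X →ₗ[ℝ] Y →ₗ[ℝ] Z) : Prop where
  dense_span : Dense (Submodule.span ℝ (Set.range fun p : X × Y => m p.1 p.2) : Set Z)
  norm_eq : ∀ (n : ℕ) (x : Fin n → X) (y : Fin n → Y),
    ‖∑ i, m (x i) (y i)‖ = sInf {r : ℝ | ∃ (k : ℕ) (u : Fin k → X) (v : Fin k → Y),
      (∑ i, m (u i) (v i) = ∑ i, m (x i) (y i)) ∧ r = ∑ i, ‖u i‖ * ‖v i‖}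

end Defs

/-- If `x ∈ S_X` is a Daugavet point, then for every `ε > 0` and every slice `S(B_X, x*, α)`
there is a slice `S(B_X, x₀*, α₀)` contained in it on which `‖x + y‖ ≥ 2 − ε` holds for every
point `y`. -/
theorem stmt_10 {X : Type*} [NormedAddCommGroup X] [NormedSpace ℝ X] [CompleteSpace X]
    (x : X) (hx : ‖x‖ = 1) (hxD : DaugavetPoint x)
    (ε : ℝ) (hε : 0 < ε) (f : X →L[ℝ] ℝ) (α : ℝ) (hα : 0 < α) :
    ∃ (f₀ : X →L[ℝ] ℝ) (α₀ : ℝ), 0 < α₀ ∧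
      ballSlice f₀ α₀ ⊆ ballSlice f α ∧
      ∀ y ∈ ballSlice f₀ α₀, 2 - ε ≤ ‖x + y‖ := by
  set δ : ℝ := min (min (ε / 4) (α / 3)) (1 / 2) with hδdef
  have hδ : 0 < δ := by
    apply lt_min (lt_min (by linarith) (by linarith)) (by norm_num)
  have hδε : 4 * δ ≤ ε := by
    have := min_le_left (min (ε / 4) (α / 3)) (1 / 2)
    have := min_le_left (ε / 4) (α / 3)
    simp only [hδdef]; nlinarith [min_le_left (min (ε / 4) (α / 3)) (1 / 2),
      min_le_left (ε / 4) (α / 3)]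
  have hδα : 3 * δ ≤ α := by
    nlinarith [min_le_left (min (ε / 4) (α / 3)) (1 / 2),
      min_le_right (ε / 4) (α / 3)]
  have hδ2 : δ ≤ 1 / 2 := min_le_right _ _
  obtain ⟨y, ⟨hy1, hy2⟩, hy3⟩ := hxD (-f) δ δ hδ hδ
  set z : X := -y with hzdef
  have hz1 : ‖z‖ ≤ 1 := by simpa [hzdef] using hy1
  have hz2 : ‖f‖ - δ < f z := by
    have hn : ‖-f‖ = ‖f‖ := norm_neg f
    have : ‖-f‖ - δ < (-f) y := hy2
    rw [hn] at this
    simpa [hzdef] using this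
  have hxz : 2 - δ ≤ ‖x + z‖ := by
    simpa [hzdef, sub_eq_add_neg] using hy3
  have hxzne : x + z ≠ 0 := by
    intro h
    rw [h, norm_zero] at hxz
    linarith
  obtain ⟨g, hg1, hg2⟩ := exists_dual_vector ℝ (x + z) (norm_ne_zero_iff.mpr hxzne)
  have hg2' : g x + g z = ‖x + z‖ := by
    have := hg2
    rw [← map_add] at *
    simpa using hg2
  have habs : ∀ w : X, ‖w‖ ≤ 1 → g w ≤ 1 := by
    intro w hw
    calc g w ≤ |g w| := le_abs_self _
    _ = ‖g w‖ := (Real.norm_eq_abs _).symm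
    _ ≤ ‖g‖ * ‖w‖ := g.le_opNorm w
    _ ≤ 1 := by rw [hg1]; linarith
  have hx1 : ‖x‖ ≤ 1 := le_of_eq hx
  have hgx : (1 : ℝ) - δ ≤ g x := by
    have := habs z hz1
    linarith [hg2' ▸ hxz]
  have hgz : (1 : ℝ) - δ ≤ g z := by
    have := habs x hx1
    linarith [hg2' ▸ hxz]
  refine ⟨f + g, δ, hδ, ?_, ?_⟩
  · -- subset
    have hnorm : ‖f‖ + 1 - 2 * δ < ‖f + g‖ := by
      have h1 : (f + g) z ≤ ‖f + g‖ := by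
        calc (f + g) z ≤ |(f + g) z| := le_abs_self _
        _ = ‖(f + g) z‖ := (Real.norm_eq_abs _).symm
        _ ≤ ‖f + g‖ * ‖z‖ := (f + g).le_opNorm z
        _ ≤ ‖f + g‖ := by nlinarith [norm_nonneg (f + g)]
      have h2 : (f + g) z = f z + g z := rfl
      linarith
    intro w hw
    obtain ⟨hw1, hw2⟩ := hw
    have hw3 : (f + g) w = f w + g w := rfl
    have hgw : g w ≤ 1 := habs w hw1
    refine ⟨hw1, ?_⟩
    have : ‖f + g‖ - δ < f w + g w := hw3 ▸ hw2
    linarith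
  · intro w hw
    obtain ⟨hw1, hw2⟩ := hw
    have hnorm : ‖f‖ + 1 - 2 * δ < ‖f + g‖ := by
      have h1 : (f + g) z ≤ ‖f + g‖ := by
        calc (f + g) z ≤ |(f + g) z| := le_abs_self _
        _ = ‖(f + g) z‖ := (Real.norm_eq_abs _).symm
        _ ≤ ‖f + g‖ * ‖z‖ := (f + g).le_opNorm z
        _ ≤ ‖f + g‖ := by nlinarith [norm_nonneg (f + g)]
      have h2 : (f + g) z = f z + g z := rfl
      linarith
    have hw3 : (f + g) w = f w + g w := rfl
    have hfw : f w ≤ ‖f‖ := by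
      calc f w ≤ |f w| := le_abs_self _
      _ = ‖f w‖ := (Real.norm_eq_abs _).symm
      _ ≤ ‖f‖ * ‖w‖ := f.le_opNorm w
      _ ≤ ‖f‖ := by nlinarith [norm_nonneg f]
    have hgw : 1 - 3 * δ < g w := by
      have : ‖f + g‖ - δ < f w + g w := hw3 ▸ hw2
      linarith
    have hkey : g (x + w) ≤ ‖x + w‖ := by
      calc g (x + w) ≤ |g (x + w)| := le_abs_self _
      _ = ‖g (x + w)‖ := (Real.norm_eq_abs _).symm
      _ ≤ ‖g‖ * ‖x + w‖ := g.le_opNorm _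
      _ = ‖x + w‖ := by rw [hg1, one_mul]
    have : g (x + w) = g x + g w := map_add g x w
    linarith
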